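/- Let ε > 0, let ρ₁, ρ₂ ≥ 0 be real numbers and m₁, m₂ ∈ ℝ^d. Then | m₁/(ρ₁ + ε(1 + |m₁|)) − m₂/(ρ₂ + ε(1 + |m₂|)) | ≤ 2|m₁ − m₂|/ε + |ρ₁ − ρ₂|/ε². -/

import Mathlib

/-- Pointwise stability estimate for the regularized bulk velocity
`u^(ε) = m / (ρ + ε(1 + |m|))`. -/
theorem regularized_velocity_stability (d : ℕ) (ε : ℝ) (hε : 0 < ε)
    (ρ₁ ρ₂ : ℝ) (h1 : 0 ≤ ρ₁) (h2 : 0 ≤ ρ₂)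
    (m₁ m₂ : EuclideanSpace ℝ (Fin d)) :
    ‖(ρ₁ + ε * (1 + ‖m₁‖))⁻¹ • m₁ - (ρ₂ + ε * (1 + ‖m₂‖))⁻¹ • m₂‖ ≤
      2 * ‖m₁ - m₂‖ / ε + |ρ₁ - ρ₂| / ε^2 := by
  set D₁ := ρ₁ + ε * (1 + ‖m₁‖) with hD₁def
  set D₂ := ρ₂ + ε * (1 + ‖m₂‖) with hD₂def
  have hn1 : (0:ℝ) ≤ ‖m₁‖ := norm_nonneg _
  have hn2 : (0:ℝ) ≤ ‖m₂‖ := norm_nonneg _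
  have hD₁ : ε ≤ D₁ := by nlinarith
  have hD₂ : ε ≤ D₂ := by nlinarith
  have hD₁0 : 0 < D₁ := lt_of_lt_of_le hε hD₁
  have hD₂0 : 0 < D₂ := lt_of_lt_of_le hε hD₂
  have key : D₁⁻¹ • m₁ - D₂⁻¹ • m₂
      = D₁⁻¹ • (m₁ - m₂) + ((D₂ - D₁)/(D₁*D₂)) • m₂ := by
    have h : D₂⁻¹ = D₁⁻¹ - (D₂ - D₁)/(D₁*D₂) := by
      field_simp
      ring
    rw [h]
    module
  rw [key]
  have h1' : ‖D₁⁻¹ • (m₁ - m₂)‖ ≤ ‖m₁ - m₂‖ / ε := by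
    rw [norm_smul, Real.norm_eq_abs, abs_inv, abs_of_pos hD₁0]
    rw [div_eq_inv_mul]
    gcongr
  have hm2 : ‖m₂‖ ≤ D₂ / ε := by
    rw [le_div_iff₀ hε]; nlinarith
  have hdiff : |D₂ - D₁| ≤ |ρ₁ - ρ₂| + ε * ‖m₁ - m₂‖ := by
    have h := abs_norm_sub_norm_le m₂ m₁
    rw [hD₁def, hD₂def]
    have : ρ₂ + ε * (1 + ‖m₂‖) - (ρ₁ + ε * (1 + ‖m₁‖))
        = (ρ₂ - ρ₁) + ε * (‖m₂‖ - ‖m₁‖) := by ring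
    rw [this]
    calc |(ρ₂ - ρ₁) + ε * (‖m₂‖ - ‖m₁‖)| ≤ |ρ₂ - ρ₁| + |ε * (‖m₂‖ - ‖m₁‖)| :=
          abs_add_le _ _
      _ ≤ |ρ₁ - ρ₂| + ε * ‖m₁ - m₂‖ := by
          rw [abs_sub_comm ρ₂ ρ₁, abs_mul, abs_of_pos hε]
          have : ‖m₂ - m₁‖ = ‖m₁ - m₂‖ := norm_sub_rev _ _
          gcongr
          calc |‖m₂‖ - ‖m₁‖| ≤ ‖m₂ - m₁‖ := h
            _ = ‖m₁ - m₂‖ := norm_sub_rev _ _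
  have h2' : ‖((D₂ - D₁)/(D₁*D₂)) • m₂‖ ≤ |ρ₁ - ρ₂| / ε^2 + ‖m₁ - m₂‖ / ε := by
    rw [norm_smul, Real.norm_eq_abs, abs_div, abs_of_pos (mul_pos hD₁0 hD₂0)]
    have hb : |D₂ - D₁| / (D₁ * D₂) * ‖m₂‖ ≤ |D₂ - D₁| / (D₁ * D₂) * (D₂ / ε) := by
      gcongr
    refine hb.trans ?_
    have heq : |D₂ - D₁| / (D₁ * D₂) * (D₂ / ε) = |D₂ - D₁| / (D₁ * ε) := by
      field_simp
    rw [heq]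
    have hstep : |D₂ - D₁| / (D₁ * ε) ≤ (|ρ₁ - ρ₂| + ε * ‖m₁ - m₂‖) / (ε * ε) := by
      apply div_le_div₀ (by positivity) hdiff (by positivity)
      exact mul_le_mul_of_nonneg_right hD₁ hε.le
    refine hstep.trans (le_of_eq ?_)
    field_simp
  calc ‖D₁⁻¹ • (m₁ - m₂) + ((D₂ - D₁)/(D₁*D₂)) • m₂‖
      ≤ ‖D₁⁻¹ • (m₁ - m₂)‖ + ‖((D₂ - D₁)/(D₁*D₂)) • m₂‖ := norm_add_le _ _
    _ ≤ ‖m₁ - m₂‖ / ε + (|ρ₁ - ρ₂| / ε^2 + ‖m₁ - m₂‖ / ε) := add_le_add h1' h2'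
    _ = 2 * ‖m₁ - m₂‖ / ε + |ρ₁ - ρ₂| / ε^2 := by ring
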